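/- For a symmetric traceless 2-tensor T on a 3-dimensional inner product space, the Okumura inequality holds: 6·tr(T³) ≥ −√6·|T|³, where |T|² = tr(T²). -/

import Mathlib

open Matrix in
/-- For a real symmetric (Hermitian) matrix, the trace of `T ^ k` is the sum of the `k`-th
powers of its eigenvalues. -/
lemma okumura_trace_pow_eq (T : Matrix (Fin 3) (Fin 3) ℝ) (h : T.IsHermitian) (k : ℕ) :
    (T ^ k).trace = ∑ i, h.eigenvalues i ^ k := by
  have hU := (Matrix.mem_unitaryGroup_iff).mp (h.eigenvectorUnitary).2
  have hU' := (Matrix.mem_unitaryGroup_iff').mp (h.eigenvectorUnitary).2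
  have hd : star (h.eigenvectorUnitary : Matrix (Fin 3) (Fin 3) ℝ) * T
      * (h.eigenvectorUnitary : Matrix (Fin 3) (Fin 3) ℝ)
      = diagonal (RCLike.ofReal ∘ h.eigenvalues) := by
    rw [← Unitary.conjStarAlgAut_star_apply (S := ℝ)]
    exact h.conjStarAlgAut_star_eigenvectorUnitary
  have key : (star (h.eigenvectorUnitary : Matrix (Fin 3) (Fin 3) ℝ)) * (T ^ k)
      * (h.eigenvectorUnitary : Matrix (Fin 3) (Fin 3) ℝ)
      = (diagonal (RCLike.ofReal ∘ h.eigenvalues)) ^ k := by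
    induction k with
    | zero => simp [hU']
    | succ n ih =>
      rw [pow_succ, pow_succ, ← ih, ← hd]
      have h1 : (h.eigenvectorUnitary : Matrix (Fin 3) (Fin 3) ℝ) *
          star (h.eigenvectorUnitary : Matrix (Fin 3) (Fin 3) ℝ) = 1 := hU
      calc _ = (star (h.eigenvectorUnitary : Matrix (Fin 3) (Fin 3) ℝ) * T ^ n *
          ((h.eigenvectorUnitary : Matrix (Fin 3) (Fin 3) ℝ) *
          star (h.eigenvectorUnitary : Matrix (Fin 3) (Fin 3) ℝ)) * T *
          (h.eigenvectorUnitary : Matrix (Fin 3) (Fin 3) ℝ)) := by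
            rw [h1, mul_one]; noncomm_ring
      _ = _ := by noncomm_ring
  have htr := congrArg Matrix.trace key
  rw [Matrix.trace_mul_cycle, hU, one_mul] at htr
  rw [htr, Matrix.diagonal_pow, Matrix.trace_diagonal]
  simp [RCLike.ofReal]

/-- Scalar form of Okumura's inequality: if `a + b + c = 0`, then
`6 (a³ + b³ + c³) ≥ -√6 (a² + b² + c²)^(3/2)`. -/
lemma okumura_scalar (a b c : ℝ) (hsum : a + b + c = 0) :
    6 * (a^3 + b^3 + c^3) ≥ -Real.sqrt 6 * Real.sqrt (a^2 + b^2 + c^2) ^ 3 := by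
  set s := a^2 + b^2 + c^2 with hs
  have hs0 : 0 ≤ s := by positivity
  have habc : a^3 + b^3 + c^3 = 3 * (a * b * c) := by
    have : c = -(a + b) := by linarith
    subst this; ring
  rw [habc]
  rcases le_or_gt 0 (a * b * c) with hp | hn
  · have h1 : 0 ≤ Real.sqrt 6 * Real.sqrt s ^ 3 := by positivity
    nlinarith
  · have hsq : (Real.sqrt s) ^ 2 = s := Real.sq_sqrt hs0
    have h6 : (Real.sqrt 6) ^ 2 = 6 := Real.sq_sqrt (by norm_num)
    have key : 54 * (a * b * c)^2 ≤ s ^ 3 := by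
      rw [hs]
      have hc : c = -(a + b) := by linarith
      subst hc
      nlinarith [sq_nonneg ((a - b) * (2*a + b) * (a + 2*b))]
    have hL : 0 ≤ Real.sqrt 6 * Real.sqrt s ^ 3 := by positivity
    have hR : 0 ≤ -(18 * (a*b*c)) := by linarith
    have hsq2 : (-(18 * (a*b*c)))^2 ≤ (Real.sqrt 6 * Real.sqrt s ^ 3)^2 := by
      have : (Real.sqrt 6 * Real.sqrt s ^ 3)^2 = 6 * s^3 := by
        rw [mul_pow, ← pow_mul, show 3*2 = 2*3 by ring, pow_mul, h6, hsq]
      rw [this]; nlinarith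
    have := (pow_le_pow_iff_left₀ hR hL (two_ne_zero)).1 hsq2
    linarith

/-- **Okumura's inequality.** For a symmetric traceless 2-tensor `T` on a
3-dimensional inner product space (represented as a symmetric trace-free `3 × 3` real matrix
in an orthonormal basis), `6·tr(T³) ≥ −√6·|T|³`, where `|T|² = tr(T²)`. -/
theorem okumura_inequality (T : Matrix (Fin 3) (Fin 3) ℝ)
    (hsymm : T.IsSymm) (h0 : T.trace = 0) :
    6 * (T ^ 3).trace ≥ -Real.sqrt 6 * Real.sqrt ((T ^ 2).trace) ^ 3 := by
  have hH : T.IsHermitian := by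
    ext i j
    simpa [Matrix.conjTranspose_apply] using congrFun (congrFun hsymm i) j
  have h1 := okumura_trace_pow_eq T hH 1
  have h2 := okumura_trace_pow_eq T hH 2
  have h3 := okumura_trace_pow_eq T hH 3
  rw [h2, h3, Fin.sum_univ_three, Fin.sum_univ_three]
  rw [pow_one, h0, Fin.sum_univ_three] at h1
  simp only [pow_one] at h1
  exact okumura_scalar _ _ _ h1.symm
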